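/- Assume q is C¹, q(x) → ∞ and q'(x)/q(x)² → 0 as x → ∞, and H1 holds. Then lim_{z→∞} 2 q(z) e^{γ(z)} ∫_z^∞ e^{-γ(ξ)} dξ = 1. -/

import Mathlib

open MeasureTheory Real Filter

/-- Under H1 and H2, 2 q(z) e^{γ(z)} ∫_z^∞ e^{-γ(ξ)} dξ → 1 as z → ∞. -/
theorem q_exp_gamma_tail_tendsto_one
    (q γ : ℝ → ℝ)
    (hq : ContDiff ℝ 1 q)
    (hγ : ∀ y, γ y = 2 * ∫ t in (0:ℝ)..y, q t)
    (H1 : ∫⁻ y in Set.Ioi (0:ℝ),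
        ENNReal.ofReal (Real.exp (γ y)) *
          ∫⁻ z in Set.Ioi y, ENNReal.ofReal (Real.exp (-(γ z))) < ⊤)
    (H2a : Tendsto q atTop atTop)
    (H2b : Tendsto (fun x => deriv q x / q x ^ 2) atTop (nhds 0)) :
    Tendsto
      (fun z => 2 * q z * Real.exp (γ z) * ∫ ξ in Set.Ioi z, Real.exp (-(γ ξ)))
      atTop (nhds 1) := by
  have hqc : Continuous q := hq.continuous
  have hγe : γ = fun y => 2 * ∫ t in (0:ℝ)..y, q t := funext hγ
  subst hγe
  set γ : ℝ → ℝ := fun y => 2 * ∫ t in (0:ℝ)..y, q t with hγdef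
  -- derivative of γ
  have hγd : ∀ y : ℝ, HasDerivAt γ (2 * q y) y := by
    intro y
    have h1 : HasDerivAt (fun u => ∫ t in (0:ℝ)..u, q t) (q y) y :=
      intervalIntegral.integral_hasDerivAt_right (hqc.intervalIntegrable _ _)
        (hqc.stronglyMeasurable.stronglyMeasurableAtFilter) hqc.continuousAt
    simpa [mul_comm] using h1.const_mul (2:ℝ)
  have hγcont : Continuous γ := by
    rw [continuous_iff_continuousAt]
    exact fun y => (hγd y).continuousAt
  have hfc : Continuous fun z => Real.exp (-(γ z)) := (hγcont.neg).rexp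
  -- a point beyond which the tail integral is finite
  have hfin : ∃ a : ℝ, (∫⁻ z in Set.Ioi a, ENNReal.ofReal (Real.exp (-(γ z)))) < ⊤ := by
    by_contra h
    push_neg at h
    have htop : ∀ y : ℝ, (∫⁻ z in Set.Ioi y, ENNReal.ofReal (Real.exp (-(γ z)))) = ⊤ :=
      fun y => top_le_iff.mp (h y)
    have : (∫⁻ y in Set.Ioi (0:ℝ),
        ENNReal.ofReal (Real.exp (γ y)) *
          ∫⁻ z in Set.Ioi y, ENNReal.ofReal (Real.exp (-(γ z)))) = ⊤ := by
      have heq : ∀ᵐ y ∂(volume.restrict (Set.Ioi (0:ℝ))),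
          (ENNReal.ofReal (Real.exp (γ y)) *
            ∫⁻ z in Set.Ioi y, ENNReal.ofReal (Real.exp (-(γ z)))) = (⊤ : ENNReal) := by
        filter_upwards with y
        rw [htop y, ENNReal.mul_top]
        simp [Real.exp_pos]
      rw [lintegral_congr_ae heq, setLIntegral_const]
      simp [Real.volume_Ioi]
    rw [this] at H1
    exact lt_irrefl _ H1
  obtain ⟨a, ha⟩ := hfin
  -- integrability of the tail
  have hint : ∀ z : ℝ, IntegrableOn (fun ξ => Real.exp (-(γ ξ))) (Set.Ioi z) := by
    have hIa : IntegrableOn (fun ξ => Real.exp (-(γ ξ))) (Set.Ioi a) := by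
      refine ⟨hfc.aestronglyMeasurable.restrict, ?_⟩
      rw [hasFiniteIntegral_iff_ofReal]
      · exact ha
      · filter_upwards with x using (Real.exp_pos _).le
    intro z
    have hsub : Set.Ioi z ⊆ Set.Ioc z a ∪ Set.Ioi a := by
      intro x hx
      rcases le_or_gt x a with h | h
      · exact Or.inl ⟨hx, h⟩
      · exact Or.inr h
    exact (IntegrableOn.union (hfc.integrableOn_Ioc) hIa).mono_set hsub
  -- the tail function F and its basic formula
  set F : ℝ → ℝ := fun z => ∫ ξ in Set.Ioi z, Real.exp (-(γ ξ)) with hFdef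
  have key : ∀ z : ℝ, F z = F a - ∫ t in a..z, Real.exp (-(γ t)) := by
    intro z
    rcases le_total a z with h | h
    · have hu : (∫ ξ in Set.Ioc a z ∪ Set.Ioi z, Real.exp (-(γ ξ)))
          = (∫ ξ in Set.Ioc a z, Real.exp (-(γ ξ))) + ∫ ξ in Set.Ioi z, Real.exp (-(γ ξ)) :=
        setIntegral_union (Set.Ioc_disjoint_Ioi le_rfl) measurableSet_Ioi
          hfc.integrableOn_Ioc (hint z)
      rw [Set.Ioc_union_Ioi_eq_Ioi h] at hu
      rw [intervalIntegral.integral_of_le h]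
      simp only [hFdef]
      rw [hu]; ring
    · have hu : (∫ ξ in Set.Ioc z a ∪ Set.Ioi a, Real.exp (-(γ ξ)))
          = (∫ ξ in Set.Ioc z a, Real.exp (-(γ ξ))) + ∫ ξ in Set.Ioi a, Real.exp (-(γ ξ)) :=
        setIntegral_union (Set.Ioc_disjoint_Ioi le_rfl) measurableSet_Ioi
          hfc.integrableOn_Ioc (hint a)
      rw [Set.Ioc_union_Ioi_eq_Ioi h] at hu
      rw [intervalIntegral.integral_symm, intervalIntegral.integral_of_le h]
      simp only [hFdef]
      rw [hu]; ring
  have hFe : F = fun z => F a - ∫ t in a..z, Real.exp (-(γ t)) := funext key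
  -- derivative of F
  have hFd : ∀ z : ℝ, HasDerivAt F (-(Real.exp (-(γ z)))) z := by
    intro z
    rw [hFe]
    have h1 : HasDerivAt (fun u => ∫ t in a..u, Real.exp (-(γ t))) (Real.exp (-(γ z))) z :=
      intervalIntegral.integral_hasDerivAt_right (hfc.intervalIntegrable _ _)
        (hfc.stronglyMeasurable.stronglyMeasurableAtFilter) hfc.continuousAt
    have h2 := (hasDerivAt_const z (F a)).sub h1
    rw [zero_sub] at h2
    exact h2
  -- F tends to 0
  have hF0 : Tendsto F atTop (nhds 0) := by
    have h1 : Tendsto (fun z => ∫ t in a..z, Real.exp (-(γ t))) atTop (nhds (F a)) :=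
      intervalIntegral_tendsto_integral_Ioi a (hint a) tendsto_id
    have h2 : Tendsto (fun z => F a - ∫ t in a..z, Real.exp (-(γ t))) atTop (nhds (F a - F a)) :=
      tendsto_const_nhds.sub h1
    rw [sub_self] at h2
    exact hFe ▸ h2
  -- the comparison function G
  set G : ℝ → ℝ := fun z => Real.exp (-(γ z)) / (2 * q z) with hGdef
  set G' : ℝ → ℝ := fun z => -(Real.exp (-(γ z)) * (1 + deriv q z / (2 * q z ^ 2))) with hG'def
  have hqpos : ∀ᶠ z in atTop, 0 < q z := H2a.eventually_gt_atTop 0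
  have hqd : ∀ z : ℝ, HasDerivAt q (deriv q z) z :=
    fun z => (hq.differentiable one_ne_zero z).hasDerivAt
  have hGd : ∀ᶠ z in atTop, HasDerivAt G (G' z) z := by
    filter_upwards [hqpos] with z hz
    have h2 : HasDerivAt (fun w => Real.exp (-(γ w))) (Real.exp (-(γ z)) * (-(2 * q z))) z :=
      ((hγd z).neg).exp
    have h3 : HasDerivAt (fun w => 2 * q w) (2 * deriv q z) z := (hqd z).const_mul 2
    have h4 : HasDerivAt (fun w => Real.exp (-(γ w)) / (2 * q w)) _ z := h2.div h3 (by positivity)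
    convert h4 using 1
    simp only [hG'def, G']
    field_simp
    ring
  -- G tends to 0
  have hG0 : Tendsto G atTop (nhds 0) := by
    obtain ⟨M, hM⟩ := (H2a.eventually_ge_atTop 0).exists_forall_of_atTop
    have hbound : ∀ z, M ≤ z → Real.exp (-(γ z)) ≤ Real.exp (-(γ M)) := by
      intro z hz
      have hmono : γ M ≤ γ z := by
        have hsplit : (∫ t in (0:ℝ)..M, q t) + ∫ t in M..z, q t = ∫ t in (0:ℝ)..z, q t :=
          intervalIntegral.integral_add_adjacent_intervals (hqc.intervalIntegrable _ _)
            (hqc.intervalIntegrable _ _)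
        have hnn : 0 ≤ ∫ t in M..z, q t :=
          intervalIntegral.integral_nonneg hz (fun u hu => hM u hu.1)
        simp only [hγdef]
        nlinarith
      exact Real.exp_le_exp.mpr (by linarith)
    have hlim : Tendsto (fun z => Real.exp (-(γ M)) / (2 * q z)) atTop (nhds 0) :=
      Tendsto.div_atTop tendsto_const_nhds (H2a.const_mul_atTop two_pos)
    refine squeeze_zero' ?_ ?_ hlim
    · filter_upwards [hqpos] with z hz
      simp only [hGdef]
      positivity
    · filter_upwards [hqpos, eventually_ge_atTop M] with z hz hzM
      simp only [hGdef]
      have h2q : (0:ℝ) < 2 * q z := by positivity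
      exact div_le_div_of_nonneg_right (hbound z hzM) h2q.le
  -- ratio of derivatives tends to 1
  have hu : Tendsto (fun z => deriv q z / (2 * q z ^ 2)) atTop (nhds 0) := by
    have : (fun z => deriv q z / (2 * q z ^ 2)) = fun z => (deriv q z / q z ^ 2) / 2 := by
      funext z; ring
    rw [this]
    simpa using H2b.div_const 2
  have husmall : ∀ᶠ z in atTop, |deriv q z / (2 * q z ^ 2)| < 1/2 := by
    have := hu.eventually (eventually_abs_sub_lt 0 (by norm_num : (0:ℝ) < 1/2))
    simpa using this
  have hG'ne : ∀ᶠ z in atTop, G' z ≠ 0 := by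
    filter_upwards [husmall] with z hz
    simp only [hG'def]
    have h1 : 0 < 1 + deriv q z / (2 * q z ^ 2) := by
      have := abs_lt.mp hz
      linarith [this.1]
    have := Real.exp_pos (-(γ z))
    intro hcon
    nlinarith
  have hdiv : Tendsto (fun z => (-(Real.exp (-(γ z)))) / G' z) atTop (nhds 1) := by
    have heq : ∀ᶠ z in atTop, (-(Real.exp (-(γ z)))) / G' z
        = 1 / (1 + deriv q z / (2 * q z ^ 2)) := by
      filter_upwards [husmall] with z hz
      have hpos : 0 < 1 + deriv q z / (2 * q z ^ 2) := by
        have := abs_lt.mp hz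
        linarith [this.1]
      simp only [hG'def]
      rw [neg_div_neg_eq]
      rw [eq_div_iff (ne_of_gt hpos)]
      field_simp
      have h2e : 2 + deriv q z / q z ^ 2 = 2 * (1 + deriv q z / (2 * q z ^ 2)) := by ring
      exact div_self (show (0:ℝ) < 2 + deriv q z / q z ^ 2 by rw [h2e]; linarith).ne'
    have hlim : Tendsto (fun z => 1 / (1 + deriv q z / (2 * q z ^ 2))) atTop (nhds 1) := by
      have h1 : Tendsto (fun z => 1 + deriv q z / (2 * q z ^ 2)) atTop (nhds 1) := by
        simpa using (tendsto_const_nhds (x := (1:ℝ)) (f := atTop)).add hu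
      simpa [one_div] using h1.inv₀ (by norm_num)
    exact Tendsto.congr' (heq.mono fun z h => h.symm) hlim
  -- L'Hôpital
  have hFG : Tendsto (fun z => F z / G z) atTop (nhds 1) :=
    HasDerivAt.lhopital_zero_atTop (Eventually.of_forall hFd) hGd hG'ne hF0 hG0 hdiv
  refine Tendsto.congr' ?_ hFG
  filter_upwards [hqpos] with z hz
  simp only [hGdef, hFdef]
  rw [Real.exp_neg]
  have hexp : Real.exp (γ z) ≠ 0 := Real.exp_ne_zero _
  field_simp
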